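/- Let G and H be unital associative F-algebras that are Lie nilpotent of class at most 2, and suppose that [f1,f2][f3,f4]···[f_{2k-1},f_{2k}] = 0 for all f1,...,f_{2k} ∈ H. Then G ⊗ H is Lie nilpotent of class at most 2k, i.e. [u1, u2, ..., u_{2k+1}] = 0 for all ui ∈ G ⊗ H. -/

import Mathlib

open scoped TensorProduct

/-- The left-normed commutator `[a, l₁, l₂, …]`. -/
def lnc {A : Type*} [Ring A] (a : A) (l : List A) : A :=
  l.foldl (fun x y => x * y - y * x) a

namespace Stmt4

/-- `x` is a single commutator. -/
def IsComm {A : Type*} [Ring A] (x : A) : Prop := ∃ a b, x = a * b - b * a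

variable (F : Type*) [Field F] (G H : Type*) [Ring G] [Ring H] [Algebra F G] [Algebra F H]

def GoodPair (p : G × H) : Prop := IsComm p.1 ∧ IsComm p.2

noncomputable def Zprod (lp : List (G × H)) : TensorProduct F G H :=
  (lp.map fun p => p.1 ⊗ₜ[F] p.2).prod

def Vset : Set (TensorProduct F G H) :=
  {v | (∃ g g' h, v = (g * g' - g' * g) ⊗ₜ[F] h) ∨ (∃ g h h', v = g ⊗ₜ[F] (h * h' - h' * h))}

def Pset (m : ℕ) : Set (TensorProduct F G H) :=
  {x | ∃ lp r, lp.length = m ∧ (∀ p ∈ lp, GoodPair G H p) ∧ x = Zprod F G H lp * r}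

def Qset (m : ℕ) : Set (TensorProduct F G H) :=
  {x | ∃ lp v, lp.length = m ∧ (∀ p ∈ lp, GoodPair G H p) ∧ v ∈ Vset F G H ∧
    x = Zprod F G H lp * v}

variable {F G H}

variable (hG : ∀ g1 g2 g3 : G, (g1 * g2 - g2 * g1) * g3 - g3 * (g1 * g2 - g2 * g1) = 0)
variable (hH : ∀ h1 h2 h3 : H, (h1 * h2 - h2 * h1) * h3 - h3 * (h1 * h2 - h2 * h1) = 0)

include hG in
theorem comm_central_G {c : G} (hc : IsComm c) (x : G) : c * x = x * c := by
  obtain ⟨a, b, rfl⟩ := hc; exact sub_eq_zero.mp (hG a b x)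

include hH in
theorem comm_central_H {d : H} (hd : IsComm d) (y : H) : d * y = y * d := by
  obtain ⟨a, b, rfl⟩ := hd; exact sub_eq_zero.mp (hH a b y)

theorem tmul_central {c : G} {d : H} (hc : ∀ x, c * x = x * c) (hd : ∀ y, d * y = y * d)
    (t : TensorProduct F G H) : (c ⊗ₜ[F] d) * t = t * (c ⊗ₜ[F] d) := by
  induction t using TensorProduct.induction_on with
  | zero => simp
  | tmul g h => simp [Algebra.TensorProduct.tmul_mul_tmul, hc, hd]
  | add x y hx hy => rw [mul_add, add_mul, hx, hy]

include hG hH in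
theorem Zprod_central (lp : List (G × H)) (hlp : ∀ p ∈ lp, GoodPair G H p)
    (t : TensorProduct F G H) : Zprod F G H lp * t = t * Zprod F G H lp := by
  induction lp with
  | nil => simp [Zprod]
  | cons p lp ih =>
    have hp := hlp p List.mem_cons_self
    have hz : Zprod F G H (p :: lp) = (p.1 ⊗ₜ[F] p.2) * Zprod F G H lp := by
      simp [Zprod]
    have h1 : ∀ t : TensorProduct F G H, (p.1 ⊗ₜ[F] p.2) * t = t * (p.1 ⊗ₜ[F] p.2) :=
      tmul_central (comm_central_G hG hp.1) (comm_central_H hH hp.2)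
    have h2 := ih (fun q hq => hlp q (List.mem_cons_of_mem p hq))
    rw [hz, mul_assoc, h2, ← mul_assoc, h1 t, mul_assoc]

theorem Zprod_append (lp lp' : List (G × H)) :
    Zprod F G H (lp ++ lp') = Zprod F G H lp * Zprod F G H lp' := by
  simp [Zprod]

theorem Zprod_eq_tmul (lp : List (G × H)) :
    Zprod F G H lp = (lp.map Prod.fst).prod ⊗ₜ[F] (lp.map Prod.snd).prod := by
  induction lp with
  | nil => simp [Zprod, Algebra.TensorProduct.one_def]
  | cons p lp ih =>
    simp only [Zprod, List.map_cons, List.prod_cons] at *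
    rw [ih, Algebra.TensorProduct.tmul_mul_tmul]

/-- Every bracket lies in the span of `Vset`. -/
theorem bra_mem_V (r u : TensorProduct F G H) :
    r * u - u * r ∈ Submodule.span F (Vset F G H) := by
  induction r using TensorProduct.induction_on with
  | zero => simp
  | add x y hx hy =>
    have : (x + y) * u - u * (x + y) = (x * u - u * x) + (y * u - u * y) := by noncomm_ring
    rw [this]; exact add_mem hx hy
  | tmul g h =>
    induction u using TensorProduct.induction_on with
    | zero => simp
    | add x y hx hy =>
      have : g ⊗ₜ[F] h * (x + y) - (x + y) * g ⊗ₜ[F] h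
          = (g ⊗ₜ[F] h * x - x * g ⊗ₜ[F] h) + (g ⊗ₜ[F] h * y - y * g ⊗ₜ[F] h) := by
        noncomm_ring
      rw [this]; exact add_mem hx hy
    | tmul g' h' =>
      have key : g ⊗ₜ[F] h * g' ⊗ₜ[F] h' - g' ⊗ₜ[F] h' * g ⊗ₜ[F] h
          = (g * g' - g' * g) ⊗ₜ[F] (h * h') + (g' * g) ⊗ₜ[F] (h * h' - h' * h) := by
        simp only [Algebra.TensorProduct.tmul_mul_tmul, TensorProduct.sub_tmul,
          TensorProduct.tmul_sub]
        abel
      rw [key]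
      exact add_mem (Submodule.subset_span (Or.inl ⟨g, g', h * h', rfl⟩))
        (Submodule.subset_span (Or.inr ⟨g' * g, h, h', rfl⟩))

/-- multiplication by `Zprod lp` maps `span (Pset 1)` into `span (Pset (m+1))`. -/
theorem zmul_P1 {lp : List (G × H)} {m : ℕ} (hlen : lp.length = m)
    (hlp : ∀ p ∈ lp, GoodPair G H p) {w : TensorProduct F G H}
    (hw : w ∈ Submodule.span F (Pset F G H 1)) :
    Zprod F G H lp * w ∈ Submodule.span F (Pset F G H (m + 1)) := by
  induction hw using Submodule.span_induction with
  | mem x hx =>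
    obtain ⟨lp', r, hlen', hlp', rfl⟩ := hx
    refine Submodule.subset_span ⟨lp ++ lp', r, ?_, ?_, ?_⟩
    · simp [hlen, hlen']
    · intro p hp
      rcases List.mem_append.mp hp with h | h
      exacts [hlp p h, hlp' p h]
    · rw [Zprod_append, mul_assoc]
  | zero => simp
  | add x y _ _ hx hy => rw [mul_add]; exact add_mem hx hy
  | smul c x _ hx => rw [mul_smul_comm]; exact Submodule.smul_mem _ c hx

/-- multiplication by `Zprod lp` maps `span Vset` into `span (Qset m)`. -/
theorem zmul_V {lp : List (G × H)} {m : ℕ} (hlen : lp.length = m)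
    (hlp : ∀ p ∈ lp, GoodPair G H p) {w : TensorProduct F G H}
    (hw : w ∈ Submodule.span F (Vset F G H)) :
    Zprod F G H lp * w ∈ Submodule.span F (Qset F G H m) := by
  induction hw using Submodule.span_induction with
  | mem x hx => exact Submodule.subset_span ⟨lp, x, hlen, hlp, hx, rfl⟩
  | zero => simp
  | add x y _ _ hx hy => rw [mul_add]; exact add_mem hx hy
  | smul c x _ hx => rw [mul_smul_comm]; exact Submodule.smul_mem _ c hx

include hG hH in
/-- Bracket of a `Vset` generator with anything lands in `span (Pset 1)`. -/
theorem bra_V_mem_P1 {v : TensorProduct F G H} (hv : v ∈ Vset F G H)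
    (u : TensorProduct F G H) :
    v * u - u * v ∈ Submodule.span F (Pset F G H 1) := by
  induction u using TensorProduct.induction_on with
  | zero => simp
  | add x y hx hy =>
    have : v * (x + y) - (x + y) * v = (v * x - x * v) + (v * y - y * v) := by noncomm_ring
    rw [this]; exact add_mem hx hy
  | tmul g'' h'' =>
    obtain (⟨g, g', h, rfl⟩ | ⟨g, h, h', rfl⟩) := hv
    · -- v = [g,g'] ⊗ h
      set c : G := g * g' - g' * g with hc
      have hcen : ∀ x : G, c * x = x * c := comm_central_G hG ⟨g, g', rfl⟩
      have key : c ⊗ₜ[F] h * g'' ⊗ₜ[F] h'' - g'' ⊗ₜ[F] h'' * c ⊗ₜ[F] h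
          = (c ⊗ₜ[F] (h * h'' - h'' * h)) * (g'' ⊗ₜ[F] (1 : H)) := by
        simp only [Algebra.TensorProduct.tmul_mul_tmul, TensorProduct.tmul_sub,
          TensorProduct.sub_tmul, sub_mul, hcen g'', mul_one]
      rw [key]
      refine Submodule.subset_span ⟨[(c, h * h'' - h'' * h)], g'' ⊗ₜ[F] (1 : H), rfl, ?_, ?_⟩
      · rintro p hp
        simp only [List.mem_singleton] at hp
        subst hp
        exact ⟨⟨g, g', rfl⟩, ⟨h, h'', rfl⟩⟩
      · simp [Zprod]
    · -- v = g ⊗ [h,h']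
      set d : H := h * h' - h' * h with hd
      have hcen : ∀ y : H, d * y = y * d := comm_central_H hH ⟨h, h', rfl⟩
      have key : g ⊗ₜ[F] d * g'' ⊗ₜ[F] h'' - g'' ⊗ₜ[F] h'' * g ⊗ₜ[F] d
          = ((g * g'' - g'' * g) ⊗ₜ[F] d) * ((1 : G) ⊗ₜ[F] h'') := by
        simp only [Algebra.TensorProduct.tmul_mul_tmul, TensorProduct.tmul_sub,
          TensorProduct.sub_tmul, sub_mul, hcen h'', mul_one, one_mul]
      rw [key]
      refine Submodule.subset_span ⟨[(g * g'' - g'' * g, d)], (1 : G) ⊗ₜ[F] h'', rfl, ?_, ?_⟩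
      · rintro p hp
        simp only [List.mem_singleton] at hp
        subst hp
        exact ⟨⟨g, g'', rfl⟩, ⟨h, h', rfl⟩⟩
      · simp [Zprod]

include hG hH in
theorem P_to_Q {m : ℕ} {a : TensorProduct F G H}
    (ha : a ∈ Submodule.span F (Pset F G H m)) (u : TensorProduct F G H) :
    a * u - u * a ∈ Submodule.span F (Qset F G H m) := by
  induction ha using Submodule.span_induction with
  | mem x hx =>
    obtain ⟨lp, r, hlen, hlp, rfl⟩ := hx
    have hcomm : u * (Zprod F G H lp * r) = Zprod F G H lp * (u * r) := by
      rw [← mul_assoc, ← Zprod_central hG hH lp hlp u, mul_assoc]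
    have key : Zprod F G H lp * r * u - u * (Zprod F G H lp * r)
        = Zprod F G H lp * (r * u - u * r) := by
      rw [mul_sub, hcomm, mul_assoc]
    rw [key]
    exact zmul_V hlen hlp (bra_mem_V r u)
  | zero => simp
  | add x y _ _ hx hy =>
    have : (x + y) * u - u * (x + y) = (x * u - u * x) + (y * u - u * y) := by noncomm_ring
    rw [this]; exact add_mem hx hy
  | smul c x _ hx =>
    have : (c • x) * u - u * (c • x) = c • (x * u - u * x) := by
      rw [smul_mul_assoc, mul_smul_comm, smul_sub]
    rw [this]; exact Submodule.smul_mem _ c hx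

include hG hH in
theorem Q_to_P {m : ℕ} {a : TensorProduct F G H}
    (ha : a ∈ Submodule.span F (Qset F G H m)) (u : TensorProduct F G H) :
    a * u - u * a ∈ Submodule.span F (Pset F G H (m + 1)) := by
  induction ha using Submodule.span_induction with
  | mem x hx =>
    obtain ⟨lp, v, hlen, hlp, hv, rfl⟩ := hx
    have hcomm : u * (Zprod F G H lp * v) = Zprod F G H lp * (u * v) := by
      rw [← mul_assoc, ← Zprod_central hG hH lp hlp u, mul_assoc]
    have key : Zprod F G H lp * v * u - u * (Zprod F G H lp * v)
        = Zprod F G H lp * (v * u - u * v) := by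
      rw [mul_sub, hcomm, mul_assoc]
    rw [key]
    exact zmul_P1 hlen hlp (bra_V_mem_P1 hG hH hv u)
  | zero => simp
  | add x y _ _ hx hy =>
    have : (x + y) * u - u * (x + y) = (x * u - u * x) + (y * u - u * y) := by noncomm_ring
    rw [this]; exact add_mem hx hy
  | smul c x _ hx =>
    have : (c • x) * u - u * (c • x) = c • (x * u - u * x) := by
      rw [smul_mul_assoc, mul_smul_comm, smul_sub]
    rw [this]; exact Submodule.smul_mem _ c hx

section Final

variable {k : ℕ}
variable (hprod : ∀ f : ℕ → H,
      (List.ofFn fun s : Fin k =>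
        f (2 * s + 1) * f (2 * s + 2) - f (2 * s + 2) * f (2 * s + 1)).prod = 0)

include hprod in
theorem comm_list_prod_zero (l : List H) (hlen : l.length = k)
    (hl : ∀ x ∈ l, IsComm x) : l.prod = 0 := by
  subst hlen
  choose a b hab using fun s : Fin l.length => hl (l.get s) (l.get_mem s)
  classical
  set a' : ℕ → H := fun m => if h : m < l.length then a ⟨m, h⟩ else 0 with ha'
  set b' : ℕ → H := fun m => if h : m < l.length then b ⟨m, h⟩ else 0 with hb'
  set f : ℕ → H := fun n => if n % 2 = 1 then a' ((n - 1) / 2) else b' ((n - 1) / 2) with hf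
  have hfa : ∀ s : Fin l.length, f (2 * (s : ℕ) + 1) = a s := by
    intro s
    have h2 : (2 * (s : ℕ) + 1 - 1) / 2 = (s : ℕ) := by omega
    simp only [hf, if_pos (show (2 * (s : ℕ) + 1) % 2 = 1 by omega), h2, ha',
      dif_pos s.isLt]
  have hfb : ∀ s : Fin l.length, f (2 * (s : ℕ) + 2) = b s := by
    intro s
    have h2 : (2 * (s : ℕ) + 2 - 1) / 2 = (s : ℕ) := by omega
    simp only [hf, if_neg (show ¬(2 * (s : ℕ) + 2) % 2 = 1 by omega), h2, hb',
      dif_pos s.isLt]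
  have hl2 : l = List.ofFn fun s : Fin l.length =>
      f (2 * (s : ℕ) + 1) * f (2 * (s : ℕ) + 2) - f (2 * (s : ℕ) + 2) * f (2 * (s : ℕ) + 1) := by
    apply List.ext_get (by simp)
    intro n h1 h2
    rw [List.get_ofFn]
    simp only [hfa, hfb]
    rw [← hab]
    congr 1
  conv_lhs => rw [hl2]
  exact hprod f

include hprod in
theorem Pk_zero {x : TensorProduct F G H}
    (hx : x ∈ Submodule.span F (Pset F G H k)) : x = 0 := by
  have hgen : ∀ y ∈ Pset F G H k, y = 0 := by
    rintro y ⟨lp, r, hlen, hlp, rfl⟩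
    have h0 : (lp.map Prod.snd).prod = 0 := by
      refine comm_list_prod_zero hprod _ (by simp [hlen]) ?_
      intro x hx
      obtain ⟨p, hp, rfl⟩ := List.mem_map.mp hx
      exact (hlp p hp).2
    rw [Zprod_eq_tmul, h0, TensorProduct.tmul_zero, zero_mul]
  have hle : Submodule.span F (Pset F G H k) ≤ ⊥ :=
    Submodule.span_le.mpr fun y hy => by simp [hgen y hy]
  simpa using hle hx

include hG hH hprod in
theorem chain : ∀ (n m : ℕ) (a : TensorProduct F G H) (l : List (TensorProduct F G H)),
    m + n = k → a ∈ Submodule.span F (Pset F G H m) → l.length = 2 * n → lnc a l = 0 := by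
  intro n
  induction n with
  | zero =>
    intro m a l hm ha hl
    obtain rfl : l = [] := List.eq_nil_of_length_eq_zero (by omega)
    obtain rfl : m = k := by omega
    exact Pk_zero hprod ha
  | succ n ih =>
    intro m a l hm ha hl
    match l with
    | [] => simp at hl
    | [x] => simp at hl; omega
    | x :: y :: l' =>
      have hstep : lnc a (x :: y :: l')
          = lnc ((a * x - x * a) * y - y * (a * x - x * a)) l' := rfl
      rw [hstep]
      refine ih (m + 1) _ l' (by omega) (Q_to_P hG hH (P_to_Q hG hH ha x) y) ?_
      simp only [List.length_cons] at hl ⊢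
      omega

end Final

end Stmt4

/-- if `G`, `H` are Lie nilpotent of class at most 2 and every product
of `k` commutators `[f1,f2]⋯[f_{2k-1},f_{2k}]` vanishes in `H`, then `G ⊗ H` is
Lie nilpotent of class at most `2k`. -/
theorem tensor_lieNilpotent_of_prod_commutators_eq_zero
    (F : Type*) [Field F] (G H : Type*) [Ring G] [Ring H] [Algebra F G] [Algebra F H]
    (hG : ∀ g1 g2 g3 : G, (g1 * g2 - g2 * g1) * g3 - g3 * (g1 * g2 - g2 * g1) = 0)
    (hH : ∀ h1 h2 h3 : H, (h1 * h2 - h2 * h1) * h3 - h3 * (h1 * h2 - h2 * h1) = 0)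
    (k : ℕ) (hk : 1 ≤ k)
    (hprod : ∀ f : ℕ → H,
      (List.ofFn fun s : Fin k =>
        f (2 * s + 1) * f (2 * s + 2) - f (2 * s + 2) * f (2 * s + 1)).prod = 0) :
    ∀ u : ℕ → TensorProduct F G H,
      lnc (u 1) (List.ofFn fun i : Fin (2 * k) => u (i + 2)) = 0 := by
  intro u
  refine Stmt4.chain hG hH hprod k 0 (u 1) _ (by omega) ?_ (by simp)
  exact Submodule.subset_span ⟨[], u 1, rfl, by simp, by simp [Stmt4.Zprod]⟩
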